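/- Let M and M̃ be nonnegative F×S real matrices with F, S finite, let k := rank(M̃ − M) and ε := ‖M̃ − M‖_∞ (the maximum absolute value of an entry of M̃ − M). If M̃ admits a size-r LP factorization, then the matrix M + kε·J, where J is the F×S all-ones matrix, admits a size-(r + 2k) LP factorization. In particular, rank_LP(M + kε·J) ≤ rank_LP(M̃) + 2·rank(M̃ − M). -/

import Mathlib

open Matrix

/-- A size-`r` LP factorization of a nonnegative matrix `M : F × S → ℝ` is a
decomposition `M = TU + μ𝟙` with `T ∈ ℝ₊^{F×r}`, `U ∈ ℝ₊^{r×S}`, `μ ∈ ℝ₊^F`. -/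
def IsLPFactorization {F S : Type*} (M : F → S → ℝ) (r : ℕ) : Prop :=
  ∃ (T : F → Fin r → ℝ) (U : Fin r → S → ℝ) (μ : F → ℝ),
    (∀ f j, 0 ≤ T f j) ∧ (∀ j s, 0 ≤ U j s) ∧ (∀ f, 0 ≤ μ f) ∧
    ∀ f s, M f s = ∑ j, T f j * U j s + μ f

/-- The LP rank of `M`: the minimal size of an LP factorization. -/
noncomputable def lpRank {F S : Type*} (M : F → S → ℝ) : ℕ :=
  sInf {r | IsLPFactorization M r}

/-- If the Gram determinant of the rows of `B` is nonzero, the rows are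
linearly independent. -/
lemma LP.gram_det_ne_zero_of_li {k : ℕ} {S : Type*} [Fintype S]
    (B : Matrix (Fin k) S ℝ) (h : LinearIndependent ℝ (fun i => B i)) :
    (B * Bᵀ).det ≠ 0 := by
  intro hdet
  obtain ⟨c, hc0, hc⟩ := Matrix.exists_mulVec_eq_zero_iff.2 hdet
  have h1 : (c ᵥ* B) ⬝ᵥ (c ᵥ* B) = 0 := by
    have h2 := congrArg (fun w => c ⬝ᵥ w) hc
    simpa [← Matrix.mulVec_mulVec, Matrix.dotProduct_mulVec, Matrix.mulVec_transpose] using h2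
  have h3 : c ᵥ* B = 0 := dotProduct_self_eq_zero.1 h1
  refine hc0 (funext (Fintype.linearIndependent_iff.1 h c ?_))
  ext s
  have := congrFun h3 s
  simpa [Matrix.vecMul, dotProduct, Finset.sum_apply] using this

/-- Linearly independent rows have nonzero Gram determinant. -/
lemma LP.li_of_gram_det_ne_zero {k : ℕ} {S : Type*} [Fintype S]
    (B : Matrix (Fin k) S ℝ) (h : (B * Bᵀ).det ≠ 0) :
    LinearIndependent ℝ (fun i => B i) := by
  rw [Fintype.linearIndependent_iff]
  intro c hc i
  by_contra hne
  have hc0 : c ≠ 0 := fun h0 => hne (congrFun h0 i)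
  have hvB : c ᵥ* B = 0 := by
    ext s
    have := congrFun hc s
    simpa [Matrix.vecMul, dotProduct, Finset.sum_apply] using this
  exact h (Matrix.exists_vecMul_eq_zero_iff.1 ⟨c, hc0, by
    rw [← Matrix.vecMul_vecMul, hvB, Matrix.zero_vecMul]⟩)

/-- A real matrix of rank `k` can be decomposed using `k` of its rows with
coefficients bounded by `1` in absolute value (maximal-volume argument). -/
lemma LP.exists_bounded_decomp {F S : Type*} [Fintype F] [Fintype S]
    (D : Matrix F S ℝ) (k : ℕ) (hk : D.rank = k) :
    ∃ (g : Fin k → F) (c : F → Fin k → ℝ),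
      (∀ f i, |c f i| ≤ 1) ∧ (∀ f s, D f s = ∑ i, c f i * D (g i) s) := by
  classical
  -- the row space
  set W : Submodule ℝ (S → ℝ) := Submodule.span ℝ (Set.range fun f => D f) with hW
  have hWrank : Module.finrank ℝ W = k := by
    rw [hW]
    have h1 : Dᵀ.rank = k := by rw [Matrix.rank_transpose]; exact hk
    rw [Matrix.rank_eq_finrank_span_cols] at h1
    exact h1
  -- extract an independent family of k rows
  obtain ⟨b, hbsub, hbspan, hbli⟩ :=
    exists_linearIndependent ℝ (Set.range fun f => D f)
  have hbfin : b.Finite := hbli.setFinite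
  haveI : Fintype b := hbfin.fintype
  have hbcard : Fintype.card b = k := by
    have := finrank_span_set_eq_card hbli
    rw [hbspan] at this
    rw [← hWrank, show Module.finrank ℝ W = b.toFinset.card from this, Set.toFinset_card]
  let e : Fin k ≃ b := (Fintype.equivFinOfCardEq hbcard).symm
  have hg0 : ∀ i : Fin k, ∃ f : F, D f = (e i : S → ℝ) := fun i => hbsub (e i).2
  choose g₀ hg₀ using hg0
  have hg₀li : LinearIndependent ℝ (fun i => D (g₀ i)) := by
    have : (fun i => D (g₀ i)) = (fun i => ((e i : b) : S → ℝ)) := funext fun i => hg₀ i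
    rw [this]
    exact hbli.comp e (Equiv.injective e)
  -- the (squared) volume function
  set V : (Fin k → F) → ℝ := fun g => ((D.submatrix g id) * (D.submatrix g id)ᵀ).det with hV
  have hsubrow : ∀ (g : Fin k → F) (i : Fin k), (D.submatrix g id) i = D (g i) := by
    intro g i; rfl
  have hVg₀ : V g₀ ≠ 0 := by
    apply LP.gram_det_ne_zero_of_li
    simpa [hsubrow] using hg₀li
  haveI : Nonempty (Fin k → F) := ⟨g₀⟩
  obtain ⟨g, -, hgmax⟩ :=
    Finset.exists_max_image Finset.univ (fun g => |V g|) ⟨g₀, Finset.mem_univ _⟩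
  have hVg : 0 < |V g| := lt_of_lt_of_le (abs_pos.2 hVg₀) (hgmax g₀ (Finset.mem_univ _))
  have hVgne : V g ≠ 0 := fun h => by simp [h] at hVg
  -- rows of g form a basis of the row space
  have hgli : LinearIndependent ℝ (fun i => D (g i)) := by
    have := LP.li_of_gram_det_ne_zero _ hVgne
    simpa [hsubrow] using this
  have hspan : Submodule.span ℝ (Set.range fun i => D (g i)) = W := by
    apply Submodule.eq_of_le_of_finrank_le
    · rw [hW]
      apply Submodule.span_mono
      rintro _ ⟨i, rfl⟩
      exact ⟨g i, rfl⟩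
    · rw [hWrank, finrank_span_eq_card hgli, Fintype.card_fin]
  have hmem : ∀ f, ∃ c : Fin k → ℝ, ∑ i, c i • D (g i) = D f := by
    intro f
    rw [← Submodule.mem_span_range_iff_exists_fun, hspan, hW]
    exact Submodule.subset_span ⟨f, rfl⟩
  choose c hc using hmem
  have hrepr : ∀ f s, D f s = ∑ i, c f i * D (g i) s := by
    intro f s
    have := congrFun (hc f) s
    simpa [Finset.sum_apply] using this.symm
  refine ⟨g, c, ?_, hrepr⟩
  -- the coefficient bound via volume maximality
  intro f j
  set A : Matrix (Fin k) (Fin k) ℝ := (1 : Matrix (Fin k) (Fin k) ℝ).updateRow j (c f) with hA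
  have hdetA : A.det = c f j := by
    have h1 : A = ((1 : Matrix (Fin k) (Fin k) ℝ).updateCol j (c f))ᵀ := by
      rw [hA, ← Matrix.updateRow_transpose, Matrix.transpose_one]
    rw [h1, Matrix.det_transpose, ← Matrix.cramer_apply, Matrix.cramer_one]
    rfl
  have hAB : D.submatrix (Function.update g j f) id = A * D.submatrix g id := by
    ext i s
    rcases eq_or_ne i j with rfl | hij
    · simp only [Matrix.submatrix_apply, Function.update_self, id_eq, Matrix.mul_apply, hA,
        Matrix.updateRow_self]
      exact hrepr f s
    · simp only [Matrix.submatrix_apply, Function.update_of_ne hij, id_eq, Matrix.mul_apply, hA,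
        Matrix.updateRow_ne hij, Matrix.one_apply]
      simp [Finset.sum_ite_eq, Matrix.submatrix_apply]
  have hVg' : V (Function.update g j f) = (c f j)^2 * V g := by
    rw [hV]
    simp only [hAB, Matrix.transpose_mul, ← Matrix.mul_assoc]
    rw [Matrix.det_mul, Matrix.mul_assoc, Matrix.det_mul, Matrix.det_transpose, hdetA]
    ring
  have hle : (c f j)^2 * |V g| ≤ |V g| := by
    calc (c f j)^2 * |V g| = |V (Function.update g j f)| := by
          rw [hVg', abs_mul, abs_pow, sq_abs]
      _ ≤ |V g| := hgmax _ (Finset.mem_univ _)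
  have hsq : (c f j)^2 ≤ 1 := by
    have h2 : (c f j)^2 * |V g| ≤ 1 * |V g| := by rw [one_mul]; exact hle
    exact (mul_le_mul_iff_of_pos_right hVg).1 h2
  exact (sq_le_one_iff_abs_le_one _).1 hsq

/-- An LP factorization indexed by any finite type of cardinality `n` gives a
size-`n` LP factorization. -/
lemma LP.isLPFactorization_of_card {F S ι : Type*} [Fintype ι] {M : F → S → ℝ} {n : ℕ}
    (hcard : Fintype.card ι = n)
    (T : F → ι → ℝ) (U : ι → S → ℝ) (μ : F → ℝ)
    (hT : ∀ f j, 0 ≤ T f j) (hU : ∀ j s, 0 ≤ U j s) (hμ : ∀ f, 0 ≤ μ f)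
    (hM : ∀ f s, M f s = ∑ j, T f j * U j s + μ f) :
    IsLPFactorization M n := by
  let e := Fintype.equivFinOfCardEq hcard
  refine ⟨fun f j => T f (e.symm j), fun j s => U (e.symm j) s, μ,
    fun f j => hT f _, fun j s => hU _ s, hμ, fun f s => ?_⟩
  rw [hM f s]
  congr 1
  exact (Equiv.sum_comp e.symm (fun i => T f i * U i s)).symm

/-- The main construction: rounding the factorization. -/
lemma LP.main {F S : Type*} [Fintype F] [Fintype S]
    (M Mt : Matrix F S ℝ)
    (k : ℕ) (hk : k = (Mt - M).rank)
    (ε : ℝ) (hε : ε = ⨆ f, ⨆ s, |Mt f s - M f s|)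
    (r : ℕ) (hfact : IsLPFactorization (fun f s => Mt f s) r) :
    IsLPFactorization (fun f s => M f s + (k : ℝ) * ε) (r + 2 * k) := by
  classical
  obtain ⟨T, U, μ, hT, hU, hμ, hTU⟩ := hfact
  obtain ⟨g, c, hcb, hcr⟩ := LP.exists_bounded_decomp (Mt - M) k hk.symm
  have hcr' : ∀ f s, Mt f s - M f s = ∑ i, c f i * (Mt (g i) s - M (g i) s) := by
    intro f s
    simpa [Matrix.sub_apply] using hcr f s
  have habs : ∀ f s, |Mt f s - M f s| ≤ ε := by
    intro f s
    rw [hε]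
    have h1 : |Mt f s - M f s| ≤ ⨆ s', |Mt f s' - M f s'| :=
      le_ciSup (f := fun s' => |Mt f s' - M f s'|) (Set.Finite.bddAbove (Set.finite_range _)) s
    exact h1.trans (le_ciSup (f := fun f' => ⨆ s', |Mt f' s' - M f' s'|)
      (Set.Finite.bddAbove (Set.finite_range _)) f)
  have hεnn : k ≠ 0 → 0 ≤ ε := by
    intro hk0
    have hS : 0 < Fintype.card S := by
      have := Matrix.rank_le_card_width (Mt - M)
      omega
    have hF : 0 < Fintype.card F := by
      have := Matrix.rank_le_card_height (Mt - M)
      omega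
    obtain ⟨f⟩ := Fintype.card_pos_iff.1 hF
    obtain ⟨s⟩ := Fintype.card_pos_iff.1 hS
    exact (abs_nonneg _).trans (habs f s)
  have hsumabs : ∀ f, (∑ i, |c f i|) ≤ (k : ℝ) := by
    intro f
    calc (∑ i, |c f i|) ≤ ∑ _i : Fin k, (1 : ℝ) :=
          Finset.sum_le_sum fun i _ => hcb f i
      _ = (k : ℝ) := by simp
  refine LP.isLPFactorization_of_card (ι := Fin r ⊕ (Fin k ⊕ Fin k))
    (by simp [Fintype.card_sum]; ring)
    (fun f => Sum.elim (T f) (Sum.elim (fun i => max (c f i) 0) (fun i => max (-(c f i)) 0)))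
    (Sum.elim U (Sum.elim (fun i s => ε - (Mt (g i) s - M (g i) s))
      (fun i s => ε + (Mt (g i) s - M (g i) s))))
    (fun f => μ f + ((k : ℝ) * ε - ε * ∑ i, |c f i|))
    ?_ ?_ ?_ ?_
  · rintro f (j | (i | i))
    · exact hT f j
    · exact le_max_right _ _
    · exact le_max_right _ _
  · rintro (j | (i | i)) s
    · exact hU j s
    · have := (abs_le.1 (habs (g i) s)).2
      simp only [Sum.elim_inr, Sum.elim_inl]
      linarith
    · have := (abs_le.1 (habs (g i) s)).1
      simp only [Sum.elim_inr]
      linarith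
  · intro f
    rcases eq_or_ne k 0 with rfl | hk0
    · have : (∑ i : Fin 0, |c f i|) = 0 := by simp
      simp [this, hμ f]
    · have h1 : ε * (∑ i, |c f i|) ≤ ε * (k : ℝ) :=
        mul_le_mul_of_nonneg_left (hsumabs f) (hεnn hk0)
      have := hμ f
      show 0 ≤ μ f + ((k : ℝ) * ε - ε * ∑ i, |c f i|)
      have h2 : ε * (k : ℝ) = (k : ℝ) * ε := mul_comm _ _
      linarith
  · intro f s
    rw [Fintype.sum_sum_type, Fintype.sum_sum_type]
    simp only [Sum.elim_inl, Sum.elim_inr]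
    have hMt := hTU f s
    have hD := hcr' f s
    have hcomb : (∑ i, max (c f i) 0 * (ε - (Mt (g i) s - M (g i) s)))
        + (∑ i, max (-(c f i)) 0 * (ε + (Mt (g i) s - M (g i) s)))
        = ε * (∑ i, |c f i|) - (∑ i, c f i * (Mt (g i) s - M (g i) s)) := by
      rw [← Finset.sum_add_distrib, Finset.mul_sum, ← Finset.sum_sub_distrib]
      apply Finset.sum_congr rfl
      intro i _
      rcases le_total 0 (c f i) with h | h
      · rw [max_eq_left h, max_eq_right (neg_nonpos.2 h), abs_of_nonneg h]; ring
      · rw [max_eq_right h, max_eq_left (neg_nonneg.2 h), abs_of_nonpos h]; ring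
    simp only at hMt
    linarith [hMt, hD, hcomb]

/-- Rounding a matrix approximation to a problem approximation, LP case: if `M̃` is
nonnegative with a size-`r` LP factorization, `k = rank(M̃ − M)` and
`ε = ‖M̃ − M‖_∞`, then `M + kε·J` (with `J` the all-ones matrix) admits a
size-`(r + 2k)` LP factorization; in particular
`rank_LP (M + kε·J) ≤ rank_LP M̃ + 2·rank(M̃ − M)`. -/
theorem lp_rounding {F S : Type*} [Fintype F] [Fintype S]
    (M Mt : Matrix F S ℝ)
    (hM : ∀ f s, 0 ≤ M f s) (hMt : ∀ f s, 0 ≤ Mt f s)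
    (k : ℕ) (hk : k = (Mt - M).rank)
    (ε : ℝ) (hε : ε = ⨆ f, ⨆ s, |Mt f s - M f s|)
    (r : ℕ) (hfact : IsLPFactorization (fun f s => Mt f s) r) :
    IsLPFactorization (fun f s => M f s + (k : ℝ) * ε) (r + 2 * k) ∧
    lpRank (fun f s => M f s + (k : ℝ) * ε) ≤ lpRank (fun f s => Mt f s) + 2 * k := by
  refine ⟨LP.main M Mt k hk ε hε r hfact, ?_⟩
  have hne : {r' | IsLPFactorization (fun f s => Mt f s) r'}.Nonempty := ⟨r, hfact⟩
  have hr₀ : IsLPFactorization (fun f s => Mt f s) (lpRank (fun f s => Mt f s)) :=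
    Nat.sInf_mem hne
  exact Nat.sInf_le (LP.main M Mt k hk ε hε _ hr₀)
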